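/- Fix κ > 0 and 0 < ε < 1. Suppose ω : (0,∞) → [0,∞) satisfies: (i) κ' ↦ ω(κ')/κ' is non-increasing; (ii) the derivative of κ' ↦ −ω(κ')/κ' at κ exists and is at most c. Suppose further that for every κ' ∈ (0,κ) and δ > 0 there is a path γ with sup_t [L_ε(γ(t)) + κ' A(t)] < ω(κ') + δ, where L_ε(γ(t)) ≥ 0, A(t) ∈ ℝ, and ω(κ'') ≤ sup_t [L_ε(γ(t)) + κ'' A(t)] for all κ''. Then for all sufficiently large n there exists a path γ_n such that: (a) sup_t [L_ε(γ_n(t)) + κ A_n(t)] ≤ ω(κ) + κ/n; and (b) L_ε(γ_n(t)) ≤ 8κ²c whenever L_ε(γ_n(t)) + κ A_n(t) ≥ ω(κ) − κ/n. -/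

import Mathlib

open Set

/-- An abstract sweepout: slice-wise value `ℓ t + κ * A t`, with nonnegative
regularized length `ℓ` and bounded slices. -/
structure AbstractSweepout where
  ℓ : ℝ → ℝ
  A : ℝ → ℝ
  nonneg : ∀ t ∈ Icc (0 : ℝ) 1, 0 ≤ ℓ t
  bdd : ∀ κ : ℝ, BddAbove (Set.range fun t : Icc (0 : ℝ) 1 => ℓ t + κ * A t)

/-- The max value of the sweepout for the functional `L_κ = ℓ + κ A`. -/
noncomputable def AbstractSweepout.sup (p : AbstractSweepout) (κ : ℝ) : ℝ :=
  ⨆ t : Icc (0 : ℝ) 1, (p.ℓ t + κ * p.A t)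

/-- Uniform length bound from the derivative estimate on the min-max value
(abstract form of Proposition 3.3): if `κ' ↦ ω(κ')/κ'` is non-increasing, the derivative
of `κ' ↦ −ω(κ')/κ'` at `κ` is at most `c`, and for each `κ' < κ` there are
almost-optimal sweepouts, then for all large `n` there are sweepouts `γ_n` with
max value at most `ω(κ) + κ/n` whose slices of value at least `ω(κ) − κ/n` have
regularized length at most `8κ²c`. -/
theorem uniform_length_bound
    (ε κ c : ℝ) (hε : ε ∈ Ioo (0 : ℝ) 1) (hκ : 0 < κ) (hc : 0 < c)
    (ω : ℝ → ℝ)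
    (hω0 : ∀ κ' : ℝ, 0 < κ' → 0 ≤ ω κ')
    (hmono : ∀ κ₁ κ₂ : ℝ, 0 < κ₁ → κ₁ ≤ κ₂ → ω κ₂ / κ₂ ≤ ω κ₁ / κ₁)
    (hderiv : ∃ d : ℝ, HasDerivAt (fun x => -ω x / x) d κ ∧ d ≤ c)
    (happrox : ∀ κ' ∈ Ioo (0 : ℝ) κ, ∀ δ : ℝ, 0 < δ →
      ∃ p : AbstractSweepout, p.sup κ' < ω κ' + δ ∧
        ∀ κ'' : ℝ, 0 < κ'' → ω κ'' ≤ p.sup κ'') :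
    ∃ n₀ : ℕ, ∀ n : ℕ, n₀ ≤ n →
      ∃ p : AbstractSweepout,
        p.sup κ ≤ ω κ + κ / n ∧
        ∀ t ∈ Icc (0 : ℝ) 1,
          ω κ - κ / n ≤ p.ℓ t + κ * p.A t → p.ℓ t ≤ 8 * κ ^ 2 * c := by
  obtain ⟨d, hd, hdc⟩ := hderiv
  have hslope : Filter.Tendsto (slope (fun x => -ω x / x) κ) (nhdsWithin κ {κ}ᶜ) (nhds d) :=
    hasDerivAt_iff_tendsto_slope.mp hd
  have hev : ∀ᶠ y in nhdsWithin κ {κ}ᶜ, slope (fun x => -ω x / x) κ y < 2 * c :=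
    hslope.eventually_lt_const (by linarith)
  rw [Filter.Eventually, Metric.mem_nhdsWithin_iff] at hev
  obtain ⟨δ, hδ, hδP⟩ := hev
  set m := min κ δ with hm
  have hmpos : 0 < m := lt_min hκ hδ
  obtain ⟨N, hN⟩ := exists_nat_gt (1 / (4 * c * m))
  refine ⟨N, fun n hn => ?_⟩
  have h4cm : (0:ℝ) < 4 * c * m := by positivity
  have hNpos : (0:ℝ) < N := lt_trans (by positivity) hN
  have hnR : (N:ℝ) ≤ n := Nat.cast_le.mpr hn
  have hnpos : (0:ℝ) < n := lt_of_lt_of_le hNpos hnR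
  set e : ℝ := 1 / (4 * c * n) with he_def
  have hepos : 0 < e := by positivity
  have hem : e < m := by
    rw [he_def, div_lt_iff₀ (by positivity)]
    rw [div_lt_iff₀ h4cm] at hN
    nlinarith
  have heκ : e < κ := lt_of_lt_of_le hem (min_le_left _ _)
  have heδ : e < δ := lt_of_lt_of_le hem (min_le_right _ _)
  set κ' : ℝ := κ - e with hκ'def
  have hκ'pos : 0 < κ' := by rw [hκ'def]; linarith
  have hκ'lt : κ' < κ := by rw [hκ'def]; linarith
  set u : ℝ := 1 / (2 * n) with hu_def
  have hupos : 0 < u := by positivity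
  have hu : 2 * c * e = u := by
    rw [he_def, hu_def]; field_simp; ring
  have hκn : κ / n = 2 * κ * u := by rw [hu_def]; field_simp
  -- slope estimate at κ'
  have hsl : slope (fun x => -ω x / x) κ κ' < 2 * c := by
    apply hδP
    refine ⟨?_, ne_of_lt hκ'lt⟩
    rw [Metric.mem_ball, Real.dist_eq, hκ'def]
    rw [show κ - e - κ = -e by ring, abs_neg, abs_of_pos hepos]; exact heδ
  rw [slope_def_field] at hsl
  rw [div_lt_iff_of_neg (by linarith : κ' - κ < 0)] at hsl
  have hcee : 2 * c * (κ' - κ) = -(2 * c * e) := by rw [hκ'def]; ring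
  have h2 : ω κ' / κ' < ω κ / κ + u := by
    rw [← hu]; rw [neg_div, neg_div] at hsl; linarith [hsl, hcee]
  have h2' : ω κ' ≤ κ' * (ω κ / κ + u) := by
    have := (div_lt_iff₀ hκ'pos).mp h2
    linarith [this]
  have hid2 : κ * (κ' * (ω κ / κ + u)) = κ' * ω κ + κ * (κ' * u) := by
    field_simp
  have F2 : κ * ω κ' ≤ κ' * ω κ + κ * (κ' * u) := by
    have := mul_le_mul_of_nonneg_left h2' hκ.le
    rw [hid2] at this; exact this
  obtain ⟨p, hps, hplow⟩ := happrox κ' ⟨hκ'pos, hκ'lt⟩ (κ' * u) (by positivity)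
  haveI : Nonempty ↥(Icc (0:ℝ) 1) := ⟨⟨0, by constructor <;> norm_num⟩⟩
  refine ⟨p, ?_, ?_⟩
  · rw [hκn]
    apply ciSup_le
    intro t
    have h1 : p.ℓ t + κ' * p.A t ≤ p.sup κ' := le_ciSup (p.bdd κ') t
    have h1' : p.ℓ t + κ' * p.A t < ω κ' + κ' * u := lt_of_le_of_lt h1 hps
    have h3 : 0 ≤ p.ℓ t := p.nonneg t t.2
    rw [← mul_le_mul_iff_of_pos_left hκ'pos]
    have F1 : κ * (p.ℓ t + κ' * p.A t) ≤ κ * (ω κ' + κ' * u) :=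
      mul_le_mul_of_nonneg_left h1'.le hκ.le
    have F3 : 0 ≤ e * p.ℓ t := mul_nonneg hepos.le h3
    have hid : κ' * p.ℓ t = κ * p.ℓ t - e * p.ℓ t := by rw [hκ'def]; ring
    linarith [F1, F2, F3, hid]
  · intro t ht hge
    rw [hκn] at hge
    have h1 : p.ℓ t + κ' * p.A t ≤ p.sup κ' := le_ciSup (p.bdd κ') ⟨t, ht⟩
    have h1' : p.ℓ t + κ' * p.A t < ω κ' + κ' * u := lt_of_le_of_lt h1 hps
    have h3 : 0 ≤ p.ℓ t := p.nonneg t ht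
    have F1 : κ * (p.ℓ t + κ' * p.A t) ≤ κ * (ω κ' + κ' * u) :=
      mul_le_mul_of_nonneg_left h1'.le hκ.le
    have F4 : κ' * (ω κ - 2 * κ * u) ≤ κ' * (p.ℓ t + κ * p.A t) :=
      mul_le_mul_of_nonneg_left hge hκ'pos.le
    have hid : κ' * p.ℓ t = κ * p.ℓ t - e * p.ℓ t := by rw [hκ'def]; ring
    have F5 : κ * (κ' * u) ≤ κ * (κ * u) :=
      mul_le_mul_of_nonneg_left (mul_le_mul_of_nonneg_right hκ'lt.le hupos.le) hκ.le
    have hid3 : 4 * (κ * (κ * u)) = 8 * κ ^ 2 * c * e := by rw [← hu]; ring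
    have key : p.ℓ t * e ≤ (8 * κ ^ 2 * c) * e := by linarith [F1, F2, F4, hid, F5, hid3]
    exact le_of_mul_le_mul_right key hepos
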